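/- Let E, Y be vectors in a real inner product space with Y ≠ 0, set F = E + Y and Ŷ = Y/‖Y‖. If ⟨E, F⟩ < 0, then |⟨E, F⟩| ≤ 2·|⟨E, Ŷ⟩|·|⟨F, Ŷ⟩|. -/

import Mathlib

open scoped InnerProductSpace

/-- Geometric bound on `|⟨E, F⟩|` via the components of `E` and `F` along
the (normalized) target direction, when `⟨E, F⟩ < 0`. -/
theorem inner_EF_le_target_components
    {V : Type*} [NormedAddCommGroup V] [InnerProductSpace ℝ V]
    (E Y : V) (hY : Y ≠ 0)
    (F : V) (hF : F = E + Y)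
    (Yhat : V) (hYhat : Yhat = ‖Y‖⁻¹ • Y)
    (h : ⟪E, F⟫_ℝ < 0) :
    |⟪E, F⟫_ℝ| ≤ 2 * |⟪E, Yhat⟫_ℝ| * |⟪F, Yhat⟫_ℝ| := by
  have hYn : ‖Y‖ ≠ 0 := norm_ne_zero_iff.mpr hY
  set a := ⟪E, Yhat⟫_ℝ with ha
  set b := ⟪F, Yhat⟫_ℝ with hb
  have hYY : ⟪Yhat, Yhat⟫_ℝ = 1 := by
    rw [hYhat, real_inner_smul_left, real_inner_smul_right,
      real_inner_self_eq_norm_mul_norm]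
    field_simp
  have hYsm : ‖Y‖ • Yhat = Y := by
    rw [hYhat, smul_smul]
    field_simp
    rw [one_smul]
  have hYYhat : ⟪Y, Yhat⟫_ℝ = ‖Y‖ := by
    rw [hYhat, real_inner_smul_right, real_inner_self_eq_norm_mul_norm]
    field_simp
  have hFE : F - b • Yhat = E - a • Yhat := by
    have hbval : b = a + ‖Y‖ := by
      rw [hb, ha, hF, inner_add_left, hYYhat]
    rw [hbval, add_smul, hF, hYsm]
    abel
  have key : a * b ≤ ⟪E, F⟫_ℝ := by
    have hexp : ⟪E - a • Yhat, F - b • Yhat⟫_ℝ = ⟪E, F⟫_ℝ - a * b := by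
      rw [inner_sub_left, inner_sub_right, inner_sub_right, real_inner_smul_left,
        real_inner_smul_left, real_inner_smul_right, real_inner_smul_right, hYY]
      rw [← real_inner_comm Yhat F, ← ha, ← hb]
      ring
    have hnn : 0 ≤ ⟪E - a • Yhat, F - b • Yhat⟫_ℝ := by
      rw [hFE]
      exact real_inner_self_nonneg
    linarith [hexp ▸ hnn]
  have habs : |⟪E, F⟫_ℝ| = -⟪E, F⟫_ℝ := abs_of_neg h
  have h1 : -⟪E, F⟫_ℝ ≤ |a| * |b| := by
    calc -⟪E, F⟫_ℝ ≤ -(a * b) := by linarith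
    _ ≤ |a * b| := neg_le_abs _
    _ = |a| * |b| := abs_mul a b
  nlinarith [abs_nonneg a, abs_nonneg b, mul_nonneg (abs_nonneg a) (abs_nonneg b)]
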